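/- Let F be a field, N ≥ 1, and let k, n be natural numbers with 1 ≤ k < n. Then the F-dimension of the subspace S^n ∩ 𝔪^{k+1} of F[X_0, …, X_N] (the degree-n homogeneous part of the ideal power 𝔪^{k+1}, where 𝔪 = (X_1, …, X_N)) equals Σ_{i=k+1}^{n} C(i + N − 1, N − 1), where C denotes the binomial coefficient. -/

import Mathlib

open MvPolynomial

/-- The ideal `𝔪 = (X 1, …, X N)` generated by the variables `X i` with `i ≠ 0`. -/
noncomputable def mIdeal (F : Type*) [CommSemiring F] (N : ℕ) :
    Ideal (MvPolynomial (Fin (N + 1)) F) :=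
  Ideal.span {p | ∃ i : Fin (N + 1), i ≠ 0 ∧ p = X i}

namespace Stmt8Aux

/-- The total degree in the variables `X i`, `i ≠ 0`. -/
def wt {N : ℕ} (d : Fin (N + 1) →₀ ℕ) : ℕ := ∑ i ∈ Finset.univ.erase 0, d i

lemma wt_add {N : ℕ} (a b : Fin (N + 1) →₀ ℕ) : wt (a + b) = wt a + wt b := by
  simp [wt, Finset.sum_add_distrib]

lemma wt_single {N : ℕ} {i : Fin (N + 1)} (hi : i ≠ 0) :
    wt (Finsupp.single i (1 : ℕ)) = 1 := by
  rw [wt, Finset.sum_eq_single i]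
  · simp
  · intro j hj hji
    simp [Finsupp.single_apply, Ne.symm hji]
  · intro h
    exact absurd (Finset.mem_erase.mpr ⟨hi, Finset.mem_univ i⟩) h

lemma degree_eq_sum_univ {N : ℕ} (d : Fin (N + 1) →₀ ℕ) :
    d.degree = ∑ i, d i := by
  rw [Finsupp.degree]
  exact Finset.sum_subset (Finset.subset_univ _) (by
    intro i _ hi
    exact Finsupp.notMem_support_iff.mp hi)

lemma wt_le_degree {N : ℕ} (d : Fin (N + 1) →₀ ℕ) : wt d ≤ d.degree := by
  rw [degree_eq_sum_univ]
  exact Finset.sum_le_sum_of_subset (Finset.erase_subset _ _)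

variable {F : Type*} [Field F] {N : ℕ}

lemma X_mem_mIdeal {i : Fin (N + 1)} (hi : i ≠ 0) : (X i : MvPolynomial (Fin (N + 1)) F) ∈ mIdeal F N :=
  Ideal.subset_span ⟨i, hi, rfl⟩

lemma monomial_mem_pow : ∀ (m : ℕ) (d : Fin (N + 1) →₀ ℕ), m ≤ wt d →
    (monomial d (1 : F)) ∈ (mIdeal F N) ^ m := by
  intro m
  induction m with
  | zero => intro d _; simp
  | succ m ih =>
    intro d hd
    have hpos : 0 < wt d := lt_of_lt_of_le (Nat.succ_pos m) hd
    have : ∃ i ∈ Finset.univ.erase (0 : Fin (N + 1)), d i ≠ 0 := by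
      by_contra h
      push_neg at h
      have : wt d = 0 := Finset.sum_eq_zero h
      omega
    obtain ⟨i, hi, hdi⟩ := this
    have hi0 : i ≠ 0 := (Finset.mem_erase.mp hi).1
    have hle : Finsupp.single i 1 ≤ d := Finsupp.single_le_iff.mpr (Nat.one_le_iff_ne_zero.mpr hdi)
    set d' := d - Finsupp.single i 1 with hd'
    have hsum : d' + Finsupp.single i 1 = d := tsub_add_cancel_of_le hle
    have hwt : wt d = wt d' + 1 := by
      rw [← hsum, wt_add, wt_single hi0]
    have hmono : (monomial d (1 : F)) = monomial d' 1 * X i := by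
      rw [X, monomial_mul, mul_one, hsum]
    rw [hmono, pow_succ]
    exact Ideal.mul_mem_mul (ih d' (by omega)) (X_mem_mIdeal hi0)

/-- The ideal of polynomials all of whose monomials have `wt ≥ m`. -/
def J (F : Type*) [Field F] (N m : ℕ) : Ideal (MvPolynomial (Fin (N + 1)) F) where
  carrier := {p | ∀ d ∈ p.support, m ≤ wt d}
  zero_mem' := by simp
  add_mem' := by
    intro a b ha hb d hd
    have := MvPolynomial.support_add hd
    rw [Finset.mem_union] at this
    rcases this with h | h
    · exact ha d h
    · exact hb d h
  smul_mem' := by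
    intro r p hp d hd
    have h := MvPolynomial.support_mul r p hd
    rw [Finset.mem_add] at h
    obtain ⟨a, ha, b, hb, rfl⟩ := h
    calc m ≤ wt b := hp b hb
    _ ≤ wt a + wt b := Nat.le_add_left _ _
    _ = wt (a + b) := (wt_add a b).symm

lemma pow_le_J : ∀ m : ℕ, (mIdeal F N) ^ m ≤ J F N m := by
  intro m
  induction m with
  | zero => intro p _ d _; exact Nat.zero_le _
  | succ m ih =>
    rw [pow_succ]
    refine Ideal.mul_le.mpr ?_
    intro p hp q hq d hd
    have hq1 : q ∈ J F N 1 := by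
      refine Ideal.span_le.mpr ?_ hq
      rintro _ ⟨i, hi, rfl⟩ d hd
      rw [MvPolynomial.mem_support_iff, MvPolynomial.coeff_X'] at hd
      have : Finsupp.single i 1 = d := by
        by_contra h; simp [h] at hd
      rw [← this, wt_single hi]
    have h := MvPolynomial.support_mul p q hd
    rw [Finset.mem_add] at h
    obtain ⟨a, ha, b, hb, rfl⟩ := h
    rw [wt_add]
    exact Nat.add_le_add (ih hp a ha) (hq1 b hb)

/-- The index set of monomials. -/
noncomputable def Tfin (N k n : ℕ) : Finset (Fin (N + 1) →₀ ℕ) :=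
  (Finset.finsuppAntidiag Finset.univ n).filter (fun d => k + 1 ≤ wt d)

lemma mem_Tfin {N k n : ℕ} (d : Fin (N + 1) →₀ ℕ) :
    d ∈ Tfin N k n ↔ d.degree = n ∧ k + 1 ≤ wt d := by
  simp only [Tfin, Finset.mem_filter, Finset.mem_finsuppAntidiag, Finset.subset_univ, and_true,
    degree_eq_sum_univ]

lemma span_eq (k n : ℕ) :
    (homogeneousSubmodule (Fin (N + 1)) F n ⊓
        Submodule.restrictScalars F ((mIdeal F N) ^ (k + 1))) =
      Submodule.span F ((fun d => monomial d (1 : F)) '' (Tfin N k n : Set (Fin (N + 1) →₀ ℕ))) := by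
  apply le_antisymm
  · rintro p ⟨hp1, hp2⟩
    rw [← MvPolynomial.support_sum_monomial_coeff p]
    refine Submodule.sum_mem _ ?_
    intro d hd
    have hcoeff : coeff d p ≠ 0 := MvPolynomial.mem_support_iff.mp hd
    have hdeg : d.degree = n := by
      have := hp1 hcoeff
      rwa [Finsupp.degree_eq_weight_one]
    have hwt : k + 1 ≤ wt d := pow_le_J (k + 1) hp2 d hd
    have : monomial d (coeff d p) = (coeff d p) • monomial d (1 : F) := by
      rw [MvPolynomial.smul_monomial, smul_eq_mul, mul_one]
    rw [this]
    exact Submodule.smul_mem _ _ (Submodule.subset_span ⟨d, (mem_Tfin d).mpr ⟨hdeg, hwt⟩, rfl⟩)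
  · rw [Submodule.span_le]
    rintro _ ⟨d, hd, rfl⟩
    rw [Finset.mem_coe, mem_Tfin] at hd
    rw [SetLike.mem_coe, Submodule.mem_inf]
    constructor
    · exact isHomogeneous_monomial _ hd.1
    · exact monomial_mem_pow (k + 1) d hd.2

set_option maxHeartbeats 800000 in
lemma finrank_eq_card (k n : ℕ) :
    Module.finrank F
        ↥(homogeneousSubmodule (Fin (N + 1)) F n ⊓
            Submodule.restrictScalars F ((mIdeal F N) ^ (k + 1))) = (Tfin N k n).card := by
  rw [span_eq k n]
  have hli0 : LinearIndependent F (fun s : (Fin (N + 1) →₀ ℕ) => monomial s (1 : F)) := by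
    have h := (MvPolynomial.basisMonomials (Fin (N + 1)) F).linearIndependent
    rwa [coe_basisMonomials] at h
  have hli := hli0.comp ((fun d => d.1) : {d // d ∈ Tfin N k n} → (Fin (N + 1) →₀ ℕ))
    Subtype.val_injective
  have hrange : Set.range ((fun s : (Fin (N + 1) →₀ ℕ) => monomial s (1 : F)) ∘
      (fun d : {d // d ∈ Tfin N k n} => d.1)) =
      (fun d => monomial d (1 : F)) '' (Tfin N k n : Set _) := by
    rw [Set.range_comp]
    ext d
    simp
  rw [← hrange, finrank_span_eq_card hli, Fintype.card_coe]

lemma wt_eq_sum_succ {N : ℕ} (d : Fin (N + 1) →₀ ℕ) :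
    wt d = ∑ i : Fin N, d i.succ := by
  have h1 : d 0 + wt d = ∑ i, d i := Finset.add_sum_erase _ _ (Finset.mem_univ 0)
  have h2 : ∑ i, d i = d 0 + ∑ i : Fin N, d i.succ := Fin.sum_univ_succ d
  omega

lemma card_fiber {k n j : ℕ} (hj : j ∈ Finset.Icc (k + 1) n) :
    ((Tfin N k n).filter (fun d => wt d = j)).card =
      (Finset.finsuppAntidiag (Finset.univ : Finset (Fin N)) j).card := by
  rw [Finset.mem_Icc] at hj
  apply Finset.card_nbij'
    (i := fun d => Finsupp.equivFunOnFinite.symm (fun i : Fin N => d i.succ))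
    (j := fun e => Finsupp.equivFunOnFinite.symm (Fin.cons (n - j) (fun i => e i)))
  · intro d hd
    rw [Finset.mem_coe, Finset.mem_filter, mem_Tfin] at hd
    rw [Finset.mem_coe, Finset.mem_finsuppAntidiag]
    refine ⟨?_, Finset.subset_univ _⟩
    simp only [Finsupp.coe_equivFunOnFinite_symm]
    rw [← wt_eq_sum_succ]
    exact hd.2
  · intro e he
    rw [Finset.mem_coe, Finset.mem_finsuppAntidiag] at he
    have hsum : ∑ i : Fin N, e i = j := he.1
    rw [Finset.mem_coe, Finset.mem_filter, mem_Tfin]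
    have hwt : wt (Finsupp.equivFunOnFinite.symm (Fin.cons (n - j) (fun i => e i))
        : Fin (N + 1) →₀ ℕ) = j := by
      rw [wt_eq_sum_succ]
      simp only [Finsupp.coe_equivFunOnFinite_symm, Fin.cons_succ]
      exact hsum
    beta_reduce
    refine ⟨⟨?_, by omega⟩, hwt⟩
    rw [degree_eq_sum_univ, Fin.sum_univ_succ]
    simp only [Finsupp.coe_equivFunOnFinite_symm, Fin.cons_succ, Fin.cons_zero]
    omega
  · intro d hd
    rw [Finset.mem_coe, Finset.mem_filter, mem_Tfin] at hd
    ext i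
    simp only [Finsupp.coe_equivFunOnFinite_symm]
    refine Fin.cases ?_ ?_ i
    · rw [Fin.cons_zero]
      have h1 : d 0 + wt d = d.degree := by
        rw [degree_eq_sum_univ]
        exact Finset.add_sum_erase _ _ (Finset.mem_univ 0)
      have h2 := hd.1.1
      have h3 := hd.2
      omega
    · intro i
      rw [Fin.cons_succ]
  · intro e _
    ext i
    simp only [Finsupp.coe_equivFunOnFinite_symm, Fin.cons_succ]

lemma card_antidiag (hN : 1 ≤ N) (j : ℕ) :
    (Finset.finsuppAntidiag (Finset.univ : Finset (Fin N)) j).card =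
      (j + N - 1).choose (N - 1) := by
  classical
  have hequiv : Sym (Fin N) j ≃ ↥(Finset.finsuppAntidiag (Finset.univ : Finset (Fin N)) j) :=
    { toFun := fun s => ⟨Multiset.toFinsupp s.1, by
        rw [Finset.mem_finsuppAntidiag']
        refine ⟨?_, Finset.subset_univ _⟩
        exact (Multiset.toFinsupp_sum_eq s.1).trans s.2⟩
      invFun := fun e => ⟨Finsupp.toMultiset e.1, by
        rw [Finsupp.card_toMultiset]
        exact (Finset.mem_finsuppAntidiag'.mp e.2).1⟩
      left_inv := fun s => Sym.coe_injective (Multiset.toFinsupp_toMultiset s.1)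
      right_inv := fun e => Subtype.ext (Finsupp.toMultiset_toFinsupp e.1) }
  rw [← Fintype.card_coe, ← Fintype.card_congr hequiv, Sym.card_sym_eq_choose, Fintype.card_fin]
  have h1 : N + j - 1 = N - 1 + j := by omega
  have h3 : j + N - 1 = N - 1 + j := by omega
  rw [h1, h3]
  have h := Nat.choose_symm (Nat.le_add_left j (N - 1))
  rw [Nat.add_sub_cancel] at h
  exact h.symm

lemma card_Tfin (hN : 1 ≤ N) {k n : ℕ} (hkn : k < n) :
    (Tfin N k n).card = ∑ j ∈ Finset.Icc (k + 1) n, (j + N - 1).choose (N - 1) := by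
  rw [Finset.card_eq_sum_card_fiberwise (f := wt) (t := Finset.Icc (k + 1) n) ?_]
  · refine Finset.sum_congr rfl ?_
    intro j hj
    rw [card_fiber hj, card_antidiag hN]
  · intro d hd
    rw [Finset.mem_coe, mem_Tfin] at hd
    rw [Finset.mem_coe, Finset.mem_Icc]
    exact ⟨hd.2, hd.1 ▸ wt_le_degree d⟩

end Stmt8Aux

theorem stmt_8 {F : Type*} [Field F] {N : ℕ} (hN : 1 ≤ N)
    (k n : ℕ) (hk : 1 ≤ k) (hkn : k < n) :
    Module.finrank F
        ↥(homogeneousSubmodule (Fin (N + 1)) F n ⊓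
            Submodule.restrictScalars F ((mIdeal F N) ^ (k + 1))) =
      ∑ i ∈ Finset.Icc (k + 1) n, Nat.choose (i + N - 1) (N - 1) := by
  rw [Stmt8Aux.finrank_eq_card, Stmt8Aux.card_Tfin hN hkn]
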